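/- Let A = k[[t^a, t^{a+1}]] with a ≥ 2, 𝔪 its maximal ideal, q > 0 an integer, 0 < s ∈ H = ⟨a, a+1⟩, Q = (t^s), I = Q : 𝔪^q. Then the following are equivalent: (1) I ⊆ t^s k[[t]] ∩ A (I is integral over Q); (2) 𝔪^q I = 𝔪^q Q; (3) q < a. -/

import Mathlib

set_option maxHeartbeats 1000000
set_option synthInstance.maxHeartbeats 1000000

open PowerSeries
open PowerSeries

/-- The numerical semigroup ring `k[[H]]`: power series supported on `H`. -/
noncomputable def ssr (k : Type) [Field k] (H : AddSubmonoid ℕ) :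
    Subalgebra k (PowerSeries k) where
  carrier := {f | ∀ n : ℕ, n ∉ H → PowerSeries.coeff n f = 0}
  mul_mem' := by
    intro f g hf hg n hn
    rw [Set.mem_setOf_eq] at hf hg
    rw [PowerSeries.coeff_mul]
    apply Finset.sum_eq_zero
    rintro ⟨i, j⟩ hij
    replace hij : i + j = n := by simpa using hij
    dsimp only
    by_cases hi : i ∈ H
    · have hj : j ∉ H := fun hj => hn (hij ▸ H.add_mem hi hj)
      rw [hg j hj, mul_zero]
    · rw [hf i hi, zero_mul]
  add_mem' := by
    intro f g hf hg n hn
    rw [Set.mem_setOf_eq] at hf hg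
    rw [map_add, hf n hn, hg n hn, add_zero]
  one_mem' := by
    intro n hn
    have h0 : n ≠ 0 := fun h => hn (by rw [h]; exact H.zero_mem)
    simp [PowerSeries.coeff_one, h0]
  zero_mem' := by
    intro n _
    simp
  algebraMap_mem' := by
    intro r n hn
    have h0 : n ≠ 0 := fun h => hn (by rw [h]; exact H.zero_mem)
    simp [PowerSeries.algebraMap_apply, PowerSeries.coeff_C, h0]

/-- The monomial `t^n` as an element of `k[[H]]`, for `n ∈ H`. -/
noncomputable def tp (k : Type) [Field k] (H : AddSubmonoid ℕ) (n : ℕ) (hn : n ∈ H) :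
    ssr k H :=
  ⟨PowerSeries.X ^ n, by
    intro m hm
    rw [PowerSeries.coeff_X_pow]
    exact if_neg (fun h => hm (by rw [h]; exact hn))⟩

/-- The maximal ideal of `k[[H]]`, generated by the monomials `t^n`, `0 < n ∈ H`. -/
noncomputable def mIdeal (k : Type) [Field k] (H : AddSubmonoid ℕ) : Ideal (ssr k H) :=
  Ideal.span {x | ∃ n : ℕ, ∃ hn : n ∈ H, 0 < n ∧ x = tp k H n hn}

lemma dmDiv {a : ℕ} (ha : 0 < a) (m c : ℕ) (hc : c < a) : (m * a + c) % a = c ∧ (m * a + c) / a = m := by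
  constructor
  · rw [mul_comm, Nat.mul_add_mod, Nat.mod_eq_of_lt hc]
  · rw [mul_comm, Nat.mul_add_div ha, Nat.div_eq_of_lt hc, add_zero]

lemma memH_iff {a : ℕ} (ha : 2 ≤ a) {H : AddSubmonoid ℕ}
    (hH : H = AddSubmonoid.closure {a, a + 1}) (n : ℕ) :
    n ∈ H ↔ n % a ≤ n / a := by
  subst hH
  have ha0 : 0 < a := by omega
  constructor
  · intro h
    induction h using AddSubmonoid.closure_induction with
    | mem x hx =>
      rcases hx with hx | hx
      · subst hx
        obtain ⟨h1, h2⟩ := dmDiv ha0 1 0 ha0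
        simp only [mul_one, one_mul, add_zero] at h1 h2
        omega
      · simp only [Set.mem_singleton_iff] at hx
        subst hx
        obtain ⟨h1, h2⟩ := dmDiv ha0 1 1 (by omega)
        simp only [one_mul] at h1 h2
        omega
    | zero => simp
    | add x y hx hy ihx ihy =>
      have hdx := Nat.div_add_mod x a
      have hdy := Nat.div_add_mod y a
      have hrx : x % a < a := Nat.mod_lt _ ha0
      have hry : y % a < a := Nat.mod_lt _ ha0
      by_cases hc : x % a + y % a < a
      · obtain ⟨h1, h2⟩ := dmDiv ha0 (x / a + y / a) (x % a + y % a) hc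
        have hr : (x / a + y / a) * a = a * (x / a) + a * (y / a) := by ring
        have he : (x / a + y / a) * a + (x % a + y % a) = x + y := by omega
        rw [he] at h1 h2
        omega
      · obtain ⟨h1, h2⟩ := dmDiv ha0 (x / a + y / a + 1) (x % a + y % a - a) (by omega)
        have hr : (x / a + y / a + 1) * a = a * (x / a) + a * (y / a) + a := by ring
        have he : (x / a + y / a + 1) * a + (x % a + y % a - a) = x + y := by omega
        rw [he] at h1 h2
        omega
  · intro h
    have hd := Nat.div_add_mod n a
    have he : n = (n / a - n % a) • a + (n % a) • (a + 1) := by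
      simp only [smul_eq_mul]
      have h2 : (n / a - n % a) * a + n % a * a = (n / a) * a := by
        rw [← Nat.add_mul]
        congr 1
        omega
      have h3 : (n / a) * a = a * (n / a) := by ring
      have : (n / a - n % a) * a + n % a * (a + 1) = (n/a - n%a) * a + n%a * a + n % a := by ring
      omega
    rw [he]
    have hma : a ∈ AddSubmonoid.closure ({a, a+1} : Set ℕ) :=
      AddSubmonoid.subset_closure (by simp)
    have hma1 : a + 1 ∈ AddSubmonoid.closure ({a, a+1} : Set ℕ) :=
      AddSubmonoid.subset_closure (by simp)
    exact add_mem (AddSubmonoid.nsmul_mem _ hma _) (AddSubmonoid.nsmul_mem _ hma1 _)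

lemma pdm {a : ℕ} (ha : 0 < a) {m c n : ℕ} (hc : c < a) (hn : n = m * a + c) :
    (n % a ≤ n / a ↔ c ≤ m) := by
  subst hn
  obtain ⟨h1, h2⟩ := dmDiv ha m c hc
  omega

lemma arith1 {a q u : ℕ} (ha : 2 ≤ a) (hqa : q < a)
    (h : ∀ i ≤ q, (u + i) % a ≤ (u + i) / a) : q * a ≤ u := by
  have ha0 : 0 < a := by omega
  have hw := Nat.div_add_mod' u a
  have hra : u % a < a := Nat.mod_lt _ ha0
  by_cases hc : u % a + q < a
  · have hq := h q le_rfl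
    rw [pdm ha0 (m := u / a) (c := u % a + q) hc (by omega)] at hq
    -- u % a + q ≤ u / a
    have : q * a ≤ (u / a) * a := Nat.mul_le_mul_right _ (by omega)
    omega
  · have hq := h (a - 1 - u % a) (by omega)
    rw [pdm ha0 (m := u / a) (c := a - 1) (show a - 1 < a by omega) (by omega)] at hq
    -- a - 1 ≤ u / a
    have : q * a ≤ (u / a) * a := Nat.mul_le_mul_right _ (by omega)
    omega

lemma arith2 {a q w i : ℕ} (ha : 2 ≤ a) (hqa : q < a) (hi : i ≤ q)
    (h : ∀ i' ≤ q, (w + q * a + i') % a ≤ (w + q * a + i') / a) :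
    ∃ j ≤ q, j ≤ w + i ∧ (w + i - j) % a ≤ (w + i - j) / a := by
  have ha0 : 0 < a := by omega
  have hw := Nat.div_add_mod' w a
  have hra : w % a < a := Nat.mod_lt _ ha0
  by_cases hc : w % a + q < a
  · have hq := h q le_rfl
    rw [pdm ha0 (m := w / a + q) (c := w % a + q) hc (by rw [add_mul]; omega)] at hq
    refine ⟨i, hi, by omega, ?_⟩
    rw [show w + i - i = w by omega]
    rw [pdm ha0 hra hw.symm]
    omega
  · by_cases hc2 : a - w % a ≤ i
    · refine ⟨i - (a - w % a), by omega, by omega, ?_⟩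
      rw [pdm ha0 ha0 (show w + i - (i - (a - w % a)) = (w / a + 1) * a + 0 by rw [add_mul]; omega)]
      exact Nat.zero_le _
    · by_cases hc3 : i + w % a ≤ q
      · refine ⟨i + w % a, hc3, by omega, ?_⟩
        rw [pdm ha0 ha0 (show w + i - (i + w % a) = (w / a) * a + 0 by omega)]
        exact Nat.zero_le _
      · -- q < i + w % a, i + w % a < a
        have hk := h (a - 1 - w % a) (by omega)
        rw [pdm ha0 (m := w / a + q) (c := a - 1) (show a - 1 < a by omega) (by rw [add_mul]; omega)] at hk
        refine ⟨q, le_rfl, by omega, ?_⟩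
        rw [pdm ha0 (show w % a + i - q < a by omega)
          (show w + i - q = (w / a) * a + (w % a + i - q) by omega)]
        omega

lemma arith3a {a s : ℕ} (ha : 2 ≤ a) (hs : s % a ≤ s / a) (hs0 : 0 < s) :
    ∃ m, m < s ∧ s ≤ m + a ∧ m % a ≤ m / a := by
  have ha0 : 0 < a := by omega
  have hw := Nat.div_add_mod' s a
  have hra : s % a < a := Nat.mod_lt _ ha0
  have hσ : 1 ≤ s / a := by
    rcases Nat.eq_zero_or_pos (s / a) with h | h
    · rw [h, zero_mul] at hw
      omega
    · exact h
  by_cases hτ : 1 ≤ s % a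
  · refine ⟨s - 1, by omega, by omega, ?_⟩
    rw [pdm ha0 (show s % a - 1 < a by omega) (show s - 1 = (s / a) * a + (s % a - 1) by omega)]
    omega
  · refine ⟨(s / a - 1) * a + min (s / a - 1) (a - 1), ?_, ?_, ?_⟩
    · have : (s / a - 1) * a + a = (s / a) * a := by
        rw [← add_one_mul]; congr 1; omega
      omega
    · have : (s / a - 1) * a + a = (s / a) * a := by
        rw [← add_one_mul]; congr 1; omega
      omega
    · rw [pdm ha0 (show min (s / a - 1) (a - 1) < a by omega) rfl]
      omega

lemma arith3b {a q d i : ℕ} (ha : 2 ≤ a) (haq : a ≤ q) (hd1 : 1 ≤ d) (hda : d ≤ a)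
    (hi : i ≤ q) : (q * a + i - d) % a ≤ (q * a + i - d) / a := by
  have ha0 : 0 < a := by omega
  by_cases hc : i < d
  · rw [pdm ha0 (show a + i - d < a by omega)
      (show q * a + i - d = (q - 1) * a + (a + i - d) by
        have : (q - 1) * a + a = q * a := by rw [← add_one_mul]; congr 1; omega
        omega)]
    omega
  · have hw := Nat.div_add_mod' (i - d) a
    have hra : (i - d) % a < a := Nat.mod_lt _ ha0
    rw [pdm ha0 hra (show q * a + i - d = (q + (i - d) / a) * a + (i - d) % a by
      rw [add_mul]; omega)]
    exact le_trans (show (i - d) % a ≤ q by omega) (Nat.le_add_right q _)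

section Aux

variable (k : Type) [Field k] (H : AddSubmonoid ℕ)

lemma tp_coe (n : ℕ) (hn : n ∈ H) : ((tp k H n hn : ssr k H) : PowerSeries k) = X ^ n := rfl

lemma coeff_tp (d n : ℕ) (hn : n ∈ H) :
    PowerSeries.coeff d ((tp k H n hn : ssr k H) : PowerSeries k) = if d = n then 1 else 0 :=
  by rw [tp_coe, PowerSeries.coeff_X_pow]

lemma tp_congr {n n' : ℕ} (h : n = n') (hn : n ∈ H) (hn' : n' ∈ H) :
    tp k H n hn = tp k H n' hn' := by subst h; rfl

lemma tp_mul (m n : ℕ) (hm : m ∈ H) (hn : n ∈ H) :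
    tp k H m hm * tp k H n hn = tp k H (m + n) (H.add_mem hm hn) :=
  Subtype.ext (pow_add X m n).symm

lemma tp_pow (n : ℕ) (hn : n ∈ H) (e : ℕ) (he : e * n ∈ H) :
    (tp k H n hn) ^ e = tp k H (e * n) he := by
  apply Subtype.ext
  show ((tp k H n hn : ssr k H) : PowerSeries k) ^ e = _
  rw [tp_coe, tp_coe, ← pow_mul, mul_comm]

end Aux

/-- The set of monomial generators `t^(m+i)`, `i ≤ q`. -/
def genSet (k : Type) [Field k] (H : AddSubmonoid ℕ) (m q : ℕ) : Set (ssr k H) :=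
  {x | ∃ i, ∃ h : i ≤ q ∧ m + i ∈ H, x = tp k H (m + i) h.2}

section Span

variable (k : Type) [Field k] (H : AddSubmonoid ℕ)

lemma mem_span_genSet_supp (m q : ℕ) (x : ssr k H)
    (hx : x ∈ Ideal.span (genSet k H m q)) :
    ∀ n, PowerSeries.coeff n (x : PowerSeries k) ≠ 0 →
      ∃ i ≤ q, m + i ≤ n ∧ n - (m + i) ∈ H := by
  induction hx using Submodule.span_induction with
  | mem y hy =>
    obtain ⟨i, ⟨hiq, hmi⟩, rfl⟩ := hy
    intro n hn
    rw [coeff_tp] at hn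
    have : n = m + i := by by_contra h; rw [if_neg h] at hn; exact hn rfl
    exact ⟨i, hiq, by omega, by rw [show n - (m+i) = 0 by omega]; exact H.zero_mem⟩
  | zero => intro n hn; simp at hn
  | add y z hy hz ihy ihz =>
    intro n hn
    have : PowerSeries.coeff n (y : PowerSeries k) ≠ 0 ∨
        PowerSeries.coeff n (z : PowerSeries k) ≠ 0 := by
      by_contra h
      push_neg at h
      have : PowerSeries.coeff n ((y + z : ssr k H) : PowerSeries k) = 0 := by
        push_cast [h.1, h.2]
        simp [h.1, h.2]
      exact hn this
    rcases this with h | h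
    · exact ihy n h
    · exact ihz n h
  | smul c y hy ihy =>
    intro n hn
    have hcy : ((c • y : ssr k H) : PowerSeries k) =
        (c : PowerSeries k) * (y : PowerSeries k) := rfl
    rw [hcy, PowerSeries.coeff_mul] at hn
    obtain ⟨⟨u, v⟩, huv, hne⟩ := Finset.exists_ne_zero_of_sum_ne_zero hn
    rw [Finset.HasAntidiagonal.mem_antidiagonal] at huv
    have hu : u ∈ H := by
      by_contra h
      rw [c.2 u h, zero_mul] at hne
      exact hne rfl
    have hv : PowerSeries.coeff v (y : PowerSeries k) ≠ 0 := by
      intro h; rw [h, mul_zero] at hne; exact hne rfl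
    obtain ⟨i, hiq, hle, hmem⟩ := ihy v hv
    refine ⟨i, hiq, by omega, ?_⟩
    rw [show n - (m + i) = u + (v - (m + i)) by omega]
    exact H.add_mem hu hmem

end Span

lemma span_genSet_of_supp (k : Type) [Field k] (H : AddSubmonoid ℕ) (m q : ℕ)
    (hmem : ∀ i ≤ q, m + i ∈ H) (x : ssr k H)
    (hx : ∀ n, PowerSeries.coeff n (x : PowerSeries k) ≠ 0 →
      ∃ i ≤ q, m + i ≤ n ∧ n - (m + i) ∈ H) :
    x ∈ Ideal.span (genSet k H m q) := by
  classical
  set P : ℕ → ℕ → Prop := fun i d => d ∈ H ∧ ∀ i' < i, (d + (i - i')) ∉ H with hP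
  set g : ℕ → ssr k H := fun i =>
    ⟨PowerSeries.mk (fun d => if P i d then PowerSeries.coeff (m + i + d) (x : PowerSeries k) else 0), by
      intro n hn
      rw [PowerSeries.coeff_mk]
      exact if_neg (fun h => hn h.1)⟩ with hg
  set F : ℕ → ssr k H := fun i =>
    if h : i ≤ q then tp k H (m + i) (hmem i h) * g i else 0 with hF
  have hsum : x = ∑ i ∈ Finset.range (q + 1), F i := by
    apply Subtype.ext
    rw [AddSubmonoidClass.coe_finset_sum]
    ext n
    rw [map_sum]
    have hterm : ∀ i ≤ q, PowerSeries.coeff n ((F i : ssr k H) : PowerSeries k) =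
        if m + i ≤ n ∧ P i (n - (m + i)) then PowerSeries.coeff n (x : PowerSeries k) else 0 := by
      intro i hiq
      have hFi : ((F i : ssr k H) : PowerSeries k) =
          (X : PowerSeries k) ^ (m + i) * ((g i : ssr k H) : PowerSeries k) := by
        rw [hF]
        simp only [dif_pos hiq]
        rfl
      rw [hFi, mul_comm, PowerSeries.coeff_mul_X_pow']
      by_cases h1 : m + i ≤ n
      · have hgi : PowerSeries.coeff (n - (m + i)) ((g i : ssr k H) : PowerSeries k) =
            if P i (n - (m + i)) then PowerSeries.coeff (m + i + (n - (m + i))) (x : PowerSeries k) else 0 := by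
          simp [hg, PowerSeries.coeff_mk]
        rw [if_pos h1, hgi, show m + i + (n - (m + i)) = n by omega]
        by_cases h2 : P i (n - (m + i))
        · rw [if_pos h2, if_pos ⟨h1, h2⟩]
        · rw [if_neg h2, if_neg (fun h => h2 h.2)]
      · rw [if_neg h1, if_neg (fun h => h1 h.1)]
    rw [Finset.sum_congr rfl (fun i hi => hterm i (by
      rw [Finset.mem_range] at hi; omega))]
    by_cases hn : PowerSeries.coeff n (x : PowerSeries k) = 0
    · rw [hn]
      simp
    · obtain ⟨i₀', hi₀q, hi₀le, hi₀H⟩ := hx n hn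
      have hex : ∃ i, i ≤ q ∧ m + i ≤ n ∧ n - (m + i) ∈ H := ⟨i₀', hi₀q, hi₀le, hi₀H⟩
      set i₀ := Nat.find hex with hi₀
      obtain ⟨hfq, hfle, hfH⟩ := Nat.find_spec hex
      rw [Finset.sum_eq_single i₀]
      · rw [if_pos]
        refine ⟨hfle, hfH, ?_⟩
        intro i' hi' hmem'
        have heq : n - (m + i₀) + (i₀ - i') = n - (m + i') := by omega
        rw [heq] at hmem'
        exact Nat.find_min hex hi' ⟨by omega, by omega, hmem'⟩
      · intro i hi hne
        rw [Finset.mem_range] at hi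
        rcases lt_or_gt_of_ne hne with hlt | hgt
        · rw [if_neg]
          rintro ⟨h1, h2, -⟩
          exact Nat.find_min hex hlt ⟨by omega, h1, h2⟩
        · rw [if_neg]
          rintro ⟨h1, -, h3⟩
          exact h3 i₀ hgt (by rw [show n - (m + i) + (i - i₀) = n - (m + i₀) by omega]; exact hfH)
      · intro h
        exact absurd (Finset.mem_range.mpr (by omega)) h
  rw [hsum]
  apply Submodule.sum_mem
  intro i hi
  rw [Finset.mem_range] at hi
  rw [hF]
  simp only [dif_pos (show i ≤ q by omega)]
  exact Ideal.mul_mem_right _ _ (Ideal.subset_span ⟨i, ⟨by omega, hmem i (by omega)⟩, rfl⟩)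

section Ideals

variable (k : Type) [Field k] (H : AddSubmonoid ℕ)

lemma tp_mem_mpow (a : ℕ) (haH : a ∈ H) (ha1H : a + 1 ∈ H) (q i : ℕ) (hi : i ≤ q)
    (hmem : q * a + i ∈ H) :
    tp k H (q * a + i) hmem ∈ (Ideal.span {tp k H a haH, tp k H (a + 1) ha1H}) ^ q := by
  have h1 : tp k H a haH ∈ Ideal.span {tp k H a haH, tp k H (a + 1) ha1H} :=
    Ideal.subset_span (by simp)
  have h2 : tp k H (a + 1) ha1H ∈ Ideal.span {tp k H a haH, tp k H (a + 1) ha1H} :=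
    Ideal.subset_span (by simp)
  have hm1 : (q - i) * a ∈ H := by
    have := AddSubmonoid.nsmul_mem H haH (q - i)
    simpa [smul_eq_mul] using this
  have hm2 : i * (a + 1) ∈ H := by
    have := AddSubmonoid.nsmul_mem H ha1H i
    simpa [smul_eq_mul] using this
  have heq : tp k H (q * a + i) hmem =
      (tp k H a haH) ^ (q - i) * (tp k H (a + 1) ha1H) ^ i := by
    rw [tp_pow k H a haH (q - i) hm1, tp_pow k H (a + 1) ha1H i hm2,
      tp_mul]
    refine tp_congr k H ?_ _ _
    have e2 : (q - i) * a + i * a = q * a := by rw [← add_mul]; congr 1; omega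
    have e1 : i * (a + 1) = i * a + i := by ring
    omega
  have hpow : (Ideal.span {tp k H a haH, tp k H (a + 1) ha1H}) ^ (q - i) *
      (Ideal.span {tp k H a haH, tp k H (a + 1) ha1H}) ^ i =
      (Ideal.span {tp k H a haH, tp k H (a + 1) ha1H}) ^ q := by
    rw [← pow_add]; congr 1; omega
  rw [heq, ← hpow]
  exact Ideal.mul_mem_mul (Ideal.pow_mem_pow h1 _) (Ideal.pow_mem_pow h2 _)

lemma mpow_le_span (a : ℕ) (haH : a ∈ H) (ha1H : a + 1 ∈ H) (q : ℕ) (hq : 1 ≤ q) :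
    (Ideal.span {tp k H a haH, tp k H (a + 1) ha1H}) ^ q ≤
      Ideal.span (genSet k H (q * a) q) := by
  induction q, hq using Nat.le_induction with
  | base =>
    rw [pow_one, Ideal.span_le]
    rintro x (rfl | rfl)
    · exact Ideal.subset_span ⟨0, ⟨by omega, by rw [show 1 * a + 0 = a by omega]; exact haH⟩,
        tp_congr k H (by omega) _ _⟩
    · exact Ideal.subset_span ⟨1, ⟨le_rfl, by rw [show 1 * a + 1 = a + 1 by omega]; exact ha1H⟩,
        tp_congr k H (by omega) _ _⟩
  | succ q hq ih =>
    rw [pow_succ]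
    have step : Ideal.span (genSet k H (q * a) q) *
        Ideal.span {tp k H a haH, tp k H (a + 1) ha1H} ≤
        Ideal.span (genSet k H ((q + 1) * a) (q + 1)) := by
      rw [Ideal.span_mul_span, Ideal.span_le]
      intro x hx
      simp only [Set.mem_mul] at hx
      obtain ⟨u, hu, v, hv, rfl⟩ := hx
      obtain ⟨i, ⟨hiq, hiH⟩, rfl⟩ := hu
      rcases hv with rfl | rfl
      · refine Ideal.subset_span ⟨i, ⟨by omega, ?_⟩, ?_⟩
        · rw [show (q + 1) * a + i = (q * a + i) + a by ring]
          exact H.add_mem hiH haH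
        · rw [tp_mul]
          exact tp_congr k H (by ring) _ _
      · refine Ideal.subset_span ⟨i + 1, ⟨by omega, ?_⟩, ?_⟩
        · rw [show (q + 1) * a + (i + 1) = (q * a + i) + (a + 1) by ring]
          exact H.add_mem hiH ha1H
        · rw [tp_mul]
          exact tp_congr k H (by ring) _ _
    exact le_trans (Ideal.mul_mono ih le_rfl) step

lemma q_supp (s : ℕ) (hs : s ∈ H) (x : ssr k H)
    (hx : x ∈ Ideal.span {tp k H s hs}) :
    ∀ n, PowerSeries.coeff n (x : PowerSeries k) ≠ 0 → s ≤ n ∧ n - s ∈ H := by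
  obtain ⟨c, hc⟩ := Ideal.mem_span_singleton'.mp hx
  intro n hn
  have hval : (x : PowerSeries k) = (c : PowerSeries k) * (X : PowerSeries k) ^ s := by
    rw [← hc]; rfl
  rw [hval, PowerSeries.coeff_mul_X_pow'] at hn
  by_cases h1 : s ≤ n
  · rw [if_pos h1] at hn
    refine ⟨h1, ?_⟩
    by_contra h
    exact hn (c.2 _ h)
  · rw [if_neg h1] at hn; exact absurd rfl hn

lemma q_of_supp (s : ℕ) (hs : s ∈ H) (x : ssr k H)
    (hx : ∀ n, PowerSeries.coeff n (x : PowerSeries k) ≠ 0 → s ≤ n ∧ n - s ∈ H) :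
    x ∈ Ideal.span {tp k H s hs} := by
  have hset : genSet k H s 0 = {tp k H s hs} := by
    ext y
    constructor
    · rintro ⟨i, ⟨hi, hm⟩, rfl⟩
      obtain rfl : i = 0 := by omega
      exact tp_congr k H (by omega) _ _
    · rintro rfl
      exact ⟨0, ⟨le_rfl, by rw [show s + 0 = s by omega]; exact hs⟩, tp_congr k H (by omega) _ _⟩
  rw [← hset]
  have hmem : ∀ i ≤ 0, s + i ∈ H := by
    intro i hi
    obtain rfl : i = 0 := by omega
    rw [show s + 0 = s by omega]
    exact hs
  apply span_genSet_of_supp k H s 0 hmem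
  intro n hn
  obtain ⟨h1, h2⟩ := hx n hn
  exact ⟨0, le_rfl, by omega, by rw [show n - (s + 0) = n - s by omega]; exact h2⟩

end Ideals

lemma memH_qa {a : ℕ} (ha : 2 ≤ a) {H : AddSubmonoid ℕ}
    (hH : H = AddSubmonoid.closure {a, a + 1}) (q i : ℕ) (hi : i ≤ q) : q * a + i ∈ H := by
  have ha0 : 0 < a := by omega
  rw [memH_iff ha hH]
  have hw := Nat.div_add_mod' i a
  have hra : i % a < a := Nat.mod_lt _ ha0
  rw [pdm ha0 (m := q + i / a) (c := i % a) hra (by rw [add_mul]; omega)]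
  exact le_trans (show i % a ≤ q by omega) (Nat.le_add_right q _)

lemma mem_I_iff (k : Type) [Field k] {a : ℕ} (ha : 2 ≤ a) {H : AddSubmonoid ℕ}
    (hH : H = AddSubmonoid.closure {a, a + 1}) (haH : a ∈ H) (ha1H : a + 1 ∈ H)
    (q : ℕ) (hq : 0 < q) (s : ℕ) (hs : s ∈ H)
    (𝔪 : Ideal (ssr k H)) (h𝔪 : 𝔪 = Ideal.span {tp k H a haH, tp k H (a + 1) ha1H})
    (Q : Ideal (ssr k H)) (hQ : Q = Ideal.span {tp k H s hs})
    (I : Ideal (ssr k H)) (hI : I = Submodule.colon Q ((𝔪 ^ q : Ideal (ssr k H)) : Set (ssr k H))) (x : ssr k H) :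
    x ∈ I ↔ ∀ i, ∀ hi : i ≤ q, x * tp k H (q * a + i) (memH_qa ha hH q i hi) ∈ Q := by
  subst hI h𝔪
  constructor
  · intro hx i hi
    have := Submodule.mem_colon.mp hx _ (tp_mem_mpow k H a haH ha1H q i hi (memH_qa ha hH q i hi))
    simpa [smul_eq_mul] using this
  · intro hx
    rw [Submodule.mem_colon]
    intro p hp
    have hp' := mpow_le_span k H a haH ha1H q hq hp
    clear hp
    induction hp' using Submodule.span_induction with
    | mem y hy =>
      obtain ⟨i, ⟨hiq, hiH⟩, rfl⟩ := hy
      rw [smul_eq_mul]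
      exact hx i hiq
    | zero => rw [smul_zero]; exact Q.zero_mem
    | add y z hy hz ihy ihz => rw [smul_add]; exact Q.add_mem ihy ihz
    | smul c y hy ihy =>
      rw [smul_eq_mul] at ihy ⊢
      rw [smul_eq_mul, show x * (c * y) = c * (x * y) by ring]
      exact Ideal.mul_mem_left _ _ ihy

/-- Theorem 3.3: in `A = k[[t^a, t^{a+1}]]`, with `Q = (t^s)` and `I = Q : 𝔪^q`, the
conditions (1) `I ⊆ t^s k[[t]] ∩ A`, (2) `𝔪^q I = 𝔪^q Q`, (3) `q < a` are equivalent. -/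
theorem stmt12 (k : Type) [Field k] (a : ℕ) (ha : 2 ≤ a)
    (H : AddSubmonoid ℕ) (hH : H = AddSubmonoid.closure {a, a + 1})
    (haH : a ∈ H) (ha1H : a + 1 ∈ H)
    (q : ℕ) (hq : 0 < q) (s : ℕ) (hs : s ∈ H) (hs0 : 0 < s)
    (𝔪 : Ideal (ssr k H)) (h𝔪 : 𝔪 = Ideal.span {tp k H a haH, tp k H (a + 1) ha1H})
    (Q : Ideal (ssr k H)) (hQ : Q = Ideal.span {tp k H s hs})
    (I : Ideal (ssr k H)) (hI : I = Submodule.colon Q ((𝔪 ^ q : Ideal (ssr k H)) : Set (ssr k H))) :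
    ((∀ x ∈ I, ∃ g : PowerSeries k, (x : PowerSeries k) = PowerSeries.X ^ s * g) ↔ q < a) ∧
    ((𝔪 ^ q * I = 𝔪 ^ q * Q) ↔ q < a) := by
  have ha0 : 0 < a := by omega
  have haqa : 1 * a ≤ q * a := Nat.mul_le_mul_right a (by omega)
  -- support of elements of I
  have hIsupp : ∀ x ∈ I, ∀ n, PowerSeries.coeff n (x : PowerSeries k) ≠ 0 →
      ∀ i, ∀ _ : i ≤ q, s ≤ n + (q * a + i) ∧ n + (q * a + i) - s ∈ H := by
    intro x hx n hn i hi
    have hxi := (mem_I_iff k ha hH haH ha1H q hq s hs 𝔪 h𝔪 Q hQ I hI x).mp hx i hi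
    rw [hQ] at hxi
    have hco : PowerSeries.coeff (n + (q * a + i))
        ((x * tp k H (q * a + i) (memH_qa ha hH q i hi) : ssr k H) : PowerSeries k) =
        PowerSeries.coeff n (x : PowerSeries k) := by
      have hv : ((x * tp k H (q * a + i) (memH_qa ha hH q i hi) : ssr k H) : PowerSeries k) =
          (x : PowerSeries k) * (X : PowerSeries k) ^ (q * a + i) := rfl
      rw [hv, PowerSeries.coeff_mul_X_pow]
    exact q_supp k H s hs _ hxi (n + (q * a + i)) (by rw [hco]; exact hn)
  -- order bound when q < a
  have hK2 : q < a → ∀ x ∈ I, ∀ n, PowerSeries.coeff n (x : PowerSeries k) ≠ 0 → s ≤ n := by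
    intro hqa x hx n hn
    have h1 := hIsupp x hx n hn
    have h0 := (h1 0 (by omega)).1
    have harr : ∀ i, i ≤ q → ((n + q * a - s) + i) % a ≤ ((n + q * a - s) + i) / a := by
      intro i hi
      have h2 := (h1 i hi).2
      rw [memH_iff ha hH] at h2
      rw [show (n + q * a - s) + i = n + (q * a + i) - s by omega]
      exact h2
    have := arith1 ha hqa harr
    omega
  -- the counterexample element when a ≤ q
  have hcounter : a ≤ q → ∃ m₀ : ℕ, ∃ hm₀ : m₀ ∈ H, m₀ < s ∧ tp k H m₀ hm₀ ∈ I := by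
    intro hqa
    obtain ⟨m₀, hm₀s, hsm, hm₀P⟩ := arith3a ha ((memH_iff ha hH s).mp hs) hs0
    have hm₀ : m₀ ∈ H := (memH_iff ha hH m₀).mpr hm₀P
    refine ⟨m₀, hm₀, hm₀s, ?_⟩
    rw [mem_I_iff k ha hH haH ha1H q hq s hs 𝔪 h𝔪 Q hQ I hI]
    intro i hi
    rw [hQ, tp_mul]
    apply Ideal.mem_span_singleton'.mpr
    have hd : m₀ + (q * a + i) - s ∈ H := by
      rw [memH_iff ha hH]
      have h3 := arith3b (d := s - m₀) ha hqa (by omega) (by omega) hi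
      rw [show m₀ + (q * a + i) - s = q * a + i - (s - m₀) by omega]
      exact h3
    refine ⟨tp k H (m₀ + (q * a + i) - s) hd, ?_⟩
    rw [tp_mul]
    exact tp_congr k H (by omega) _ _
  -- membership of s+q*a+j in H
  have hmemS : ∀ j, j ≤ q → s + q * a + j ∈ H := by
    intro j hj
    rw [show s + q * a + j = s + (q * a + j) by omega]
    exact H.add_mem hs (memH_qa ha hH q j hj)
  -- span (genSet (s+q*a) q) ≤ 𝔪^q * Q
  have hstepB : Ideal.span (genSet k H (s + q * a) q) ≤ 𝔪 ^ q * Q := by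
    rw [Ideal.span_le]
    rintro z ⟨j, ⟨hj, hjH⟩, rfl⟩
    have heq : tp k H (s + q * a + j) hjH =
        tp k H (q * a + j) (memH_qa ha hH q j hj) * tp k H s hs := by
      rw [tp_mul]; exact tp_congr k H (by omega) _ _
    rw [heq, h𝔪]
    exact Ideal.mul_mem_mul (tp_mem_mpow k H a haH ha1H q j hj _)
      (hQ ▸ Ideal.subset_span rfl)
  -- 𝔪^q * Q ≤ span (genSet (s+q*a) q)
  have hstepC : 𝔪 ^ q * Q ≤ Ideal.span (genSet k H (s + q * a) q) := by
    rw [Ideal.mul_le]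
    intro y hy z hz
    have hysupp := mem_span_genSet_supp k H (q * a) q y
      (mpow_le_span k H a haH ha1H q hq (h𝔪 ▸ hy))
    have hzsupp := q_supp k H s hs z (hQ ▸ hz)
    apply span_genSet_of_supp k H (s + q * a) q hmemS
    intro n hn
    have hmul : ((y * z : ssr k H) : PowerSeries k) =
        (y : PowerSeries k) * (z : PowerSeries k) := rfl
    rw [hmul, PowerSeries.coeff_mul] at hn
    obtain ⟨⟨u, v⟩, huv, hne⟩ := Finset.exists_ne_zero_of_sum_ne_zero hn
    rw [Finset.HasAntidiagonal.mem_antidiagonal] at huv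
    have hcu : PowerSeries.coeff u (y : PowerSeries k) ≠ 0 := fun h => hne (by rw [h, zero_mul])
    have hcv : PowerSeries.coeff v (z : PowerSeries k) ≠ 0 := fun h => hne (by rw [h, mul_zero])
    obtain ⟨i, hiq, hile, hiH⟩ := hysupp u hcu
    obtain ⟨hvs, hvH⟩ := hzsupp v hcv
    refine ⟨i, hiq, by omega, ?_⟩
    rw [show n - (s + q * a + i) = (u - (q * a + i)) + (v - s) by omega]
    exact H.add_mem hiH hvH
  constructor
  · -- (1) ↔ (3)
    constructor
    · intro h1
      by_contra hqa
      obtain ⟨m₀, hm₀, hm₀s, hm₀I⟩ := hcounter (by omega)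
      obtain ⟨g, hg⟩ := h1 _ hm₀I
      rw [tp_coe] at hg
      have hc1 : PowerSeries.coeff m₀ ((X : PowerSeries k) ^ m₀) = 1 := by
        rw [PowerSeries.coeff_X_pow, if_pos rfl]
      have hc2 : PowerSeries.coeff m₀ ((X : PowerSeries k) ^ s * g) = 0 := by
        rw [mul_comm, PowerSeries.coeff_mul_X_pow', if_neg (by omega)]
      rw [hg, hc2] at hc1
      exact one_ne_zero hc1.symm
    · intro hqa x hx
      refine ⟨PowerSeries.mk (fun d => PowerSeries.coeff (s + d) (x : PowerSeries k)), ?_⟩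
      ext n
      rw [mul_comm, PowerSeries.coeff_mul_X_pow']
      by_cases hsn : s ≤ n
      · rw [if_pos hsn, PowerSeries.coeff_mk, show s + (n - s) = n by omega]
      · rw [if_neg hsn]
        by_contra hc
        exact hsn (hK2 hqa x hx n hc)
  · -- (2) ↔ (3)
    constructor
    · intro h2
      by_contra hqa
      obtain ⟨m₀, hm₀, hm₀s, hm₀I⟩ := hcounter (by omega)
      have he1 : tp k H (q * a + 0) (memH_qa ha hH q 0 (by omega)) * tp k H m₀ hm₀ ∈ 𝔪 ^ q * I :=
        Ideal.mul_mem_mul (h𝔪 ▸ tp_mem_mpow k H a haH ha1H q 0 (by omega) _) hm₀I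
      rw [h2] at he1
      have he2 := hstepC he1
      have hco := mem_span_genSet_supp k H (s + q * a) q _ he2 (q * a + 0 + m₀) ?_
      · obtain ⟨j, hjq, hjle, -⟩ := hco
        omega
      · rw [tp_mul, coeff_tp, if_pos rfl]
        exact one_ne_zero
    · intro hqa
      apply le_antisymm
      · -- 𝔪^q I ≤ 𝔪^q Q
        rw [Ideal.mul_le]
        intro y hy x hx
        apply hstepB
        have hysupp := mem_span_genSet_supp k H (q * a) q y
          (mpow_le_span k H a haH ha1H q hq (h𝔪 ▸ hy))
        apply span_genSet_of_supp k H (s + q * a) q hmemS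
        intro n hn
        have hmul : ((y * x : ssr k H) : PowerSeries k) =
            (y : PowerSeries k) * (x : PowerSeries k) := rfl
        rw [hmul, PowerSeries.coeff_mul] at hn
        obtain ⟨⟨u, v⟩, huv, hne⟩ := Finset.exists_ne_zero_of_sum_ne_zero hn
        rw [Finset.HasAntidiagonal.mem_antidiagonal] at huv
        have hcu : PowerSeries.coeff u (y : PowerSeries k) ≠ 0 :=
          fun h => hne (by rw [h, zero_mul])
        have hcv : PowerSeries.coeff v (x : PowerSeries k) ≠ 0 :=
          fun h => hne (by rw [h, mul_zero])
        obtain ⟨i, hiq, hile, hiH⟩ := hysupp u hcu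
        have hvs : s ≤ v := hK2 hqa x hx v hcv
        have harr2 : ∀ i', i' ≤ q → ((v - s) + q * a + i') % a ≤ ((v - s) + q * a + i') / a := by
          intro i' hi'
          have h3 := (hIsupp x hx v hcv i' hi').2
          rw [memH_iff ha hH] at h3
          rw [show (v - s) + q * a + i' = v + (q * a + i') - s by omega]
          exact h3
        obtain ⟨j, hjq, hjle, hjP⟩ := arith2 ha hqa hiq harr2
        refine ⟨j, hjq, by omega, ?_⟩
        rw [show n - (s + q * a + j) = (u - (q * a + i)) + ((v - s) + i - j) by omega]
        exact H.add_mem hiH ((memH_iff ha hH _).mpr hjP)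
      · -- 𝔪^q Q ≤ 𝔪^q I
        apply Ideal.mul_mono_right
        intro z hz
        rw [mem_I_iff k ha hH haH ha1H q hq s hs 𝔪 h𝔪 Q hQ I hI]
        intro i hi
        exact Ideal.mul_mem_right _ _ hz
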